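/- MAX SMTI admits a 2-approximate-stable mechanism that is man-strategy-proof against coalitions: there exists a mechanism S such that for every SMTI instance I, S(I) is a stable matching with 2·|S(I)| ≥ |M_opt| for every stable matching M_opt of I, and no nonempty coalition C of men has a successful strategy, i.e., there is no instance I' differing from I only in the preference lists of the members of C such that every member of C prefers S(I') to S(I) with respect to his list in I. -/

import Mathlib

/-- An instance of the stable marriage problem with ties and incomplete lists (SMTI),
with men of type `α` and women of type `β`.  Each person's preference list is
represented by a rank function: `mpref m w = none` means woman `w` is unacceptable
to man `m`, and `mpref m w = some r` means `w` is acceptable with rank `r`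
(smaller rank = more preferred; equal ranks = a tie).  This encodes exactly a
total preorder on the set of acceptable partners. -/
structure SMInst (α β : Type) where
  mpref : α → β → Option ℕ
  wpref : β → α → Option ℕ

namespace SMInst

variable {α β : Type}

/-- Woman `w` is acceptable to man `m`. -/
def mAcc (I : SMInst α β) (m : α) (w : β) : Prop := (I.mpref m w).isSome

/-- Man `m` is acceptable to woman `w`. -/
def wAcc (I : SMInst α β) (w : β) (m : α) : Prop := (I.wpref w m).isSome

/-- Man `m` strictly prefers woman `w` to woman `w'`. -/
def mPref (I : SMInst α β) (m : α) (w w' : β) : Prop :=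
  ∃ r r', I.mpref m w = some r ∧ I.mpref m w' = some r' ∧ r < r'

/-- Woman `w` strictly prefers man `m` to man `m'`. -/
def wPref (I : SMInst α β) (w : β) (m m' : α) : Prop :=
  ∃ r r', I.wpref w m = some r ∧ I.wpref w m' = some r' ∧ r < r'

/-- `M` is a matching of `I`: all pairs mutually acceptable and no person in two pairs. -/
def IsMatching (I : SMInst α β) (M : Finset (α × β)) : Prop :=
  (∀ p ∈ M, I.mAcc p.1 p.2 ∧ I.wAcc p.2 p.1) ∧
  (∀ p ∈ M, ∀ q ∈ M, p.1 = q.1 → p = q) ∧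
  (∀ p ∈ M, ∀ q ∈ M, p.2 = q.2 → p = q)

/-- Man `m` is single (unmatched) in `M`. -/
def mSingle (M : Finset (α × β)) (m : α) : Prop := ∀ w, (m, w) ∉ M

/-- Woman `w` is single (unmatched) in `M`. -/
def wSingle (M : Finset (α × β)) (w : β) : Prop := ∀ m, (m, w) ∉ M

/-- `(m, w)` blocks `M` in instance `I`. -/
def Blocks (I : SMInst α β) (M : Finset (α × β)) (m : α) (w : β) : Prop :=
  I.mAcc m w ∧ I.wAcc w m ∧
  (mSingle M m ∨ ∃ w', (m, w') ∈ M ∧ I.mPref m w w') ∧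
  (wSingle M w ∨ ∃ m', (m', w) ∈ M ∧ I.wPref w m m')

/-- `M` is a (weakly) stable matching of `I`. -/
def IsStable (I : SMInst α β) (M : Finset (α × β)) : Prop :=
  I.IsMatching M ∧ ∀ m w, ¬ I.Blocks M m w

/-- Man `m` prefers matching `M'` to matching `M`, with respect to his list in `I`:
he is matched in `M'` to an acceptable partner, and he is either single in `M`
or strictly prefers his `M'`-partner to his `M`-partner. -/
def mPrefMatching (I : SMInst α β) (m : α) (M' M : Finset (α × β)) : Prop :=
  ∃ w, (m, w) ∈ M' ∧ I.mAcc m w ∧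
    (mSingle M m ∨ ∃ w', (m, w') ∈ M ∧ I.mPref m w w')

/-- Woman `w` prefers matching `M'` to matching `M`, with respect to her list in `I`. -/
def wPrefMatching (I : SMInst α β) (w : β) (M' M : Finset (α × β)) : Prop :=
  ∃ m, (m, w) ∈ M' ∧ I.wAcc w m ∧
    (wSingle M w ∨ ∃ m', (m', w) ∈ M ∧ I.wPref w m m')

/-- `I` and `I'` differ only in man `m`'s preference list. -/
def mDiffOnly (I I' : SMInst α β) (m : α) : Prop :=
  I.wpref = I'.wpref ∧ ∀ m', m' ≠ m → I.mpref m' = I'.mpref m'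

/-- `I` and `I'` differ only in woman `w`'s preference list. -/
def wDiffOnly (I I' : SMInst α β) (w : β) : Prop :=
  I.mpref = I'.mpref ∧ ∀ w', w' ≠ w → I.wpref w' = I'.wpref w'

/-- Men's lists contain no ties. -/
def MStrict (I : SMInst α β) : Prop :=
  ∀ m w w', I.mpref m w = I.mpref m w' → I.mAcc m w → w = w'

/-- Women's lists contain no ties. -/
def WStrict (I : SMInst α β) : Prop :=
  ∀ w m m', I.wpref w m = I.wpref w m' → I.wAcc w m → m = m'

/-- `I` is an SMI instance: no ties at all (all lists strictly ordered). -/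
def NoTies (I : SMInst α β) : Prop := I.MStrict ∧ I.WStrict

/-- `I` is an SMTI-1TM instance: ties may occur only in men's lists,
i.e. women's lists are strictly ordered. -/
def OneTM (I : SMInst α β) : Prop := I.WStrict

/-- `I'` is obtained from `I` by breaking ties: same acceptable sets, and every
strict preference of `I` is preserved in `I'` (so each person's list in `I'` is a
linear extension of the corresponding total preorder in `I`). -/
def Refines (I I' : SMInst α β) : Prop :=
  (∀ m w, I.mAcc m w ↔ I'.mAcc m w) ∧
  (∀ w m, I.wAcc w m ↔ I'.wAcc w m) ∧
  (∀ m w w', I.mPref m w w' → I'.mPref m w w') ∧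
  (∀ w m m', I.wPref w m m' → I'.wPref w m m')

end SMInst

namespace SMTIProof
open SMInst
open scoped Classical

variable {n : ℕ}

/-! ### Basic preference lemmas -/

lemma mPref_irrefl (J : SMInst (Fin n) (Fin n)) (m w : Fin n) : ¬ J.mPref m w w := by
  rintro ⟨r, r', h1, h2, hlt⟩
  rw [h1] at h2; cases h2; exact lt_irrefl _ hlt

lemma wPref_irrefl (J : SMInst (Fin n) (Fin n)) (w m : Fin n) : ¬ J.wPref w m m := by
  rintro ⟨r, r', h1, h2, hlt⟩
  rw [h1] at h2; cases h2; exact lt_irrefl _ hlt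

lemma wPref_asymm {J : SMInst (Fin n) (Fin n)} {w a b : Fin n}
    (h1 : J.wPref w a b) (h2 : J.wPref w b a) : False := by
  obtain ⟨r, r', e1, e2, hlt⟩ := h1
  obtain ⟨s, s', f1, f2, hlt'⟩ := h2
  rw [e1] at f2; cases f2; rw [e2] at f1; cases f1; omega

lemma wPref_trans {J : SMInst (Fin n) (Fin n)} {w a b c : Fin n}
    (h1 : J.wPref w a b) (h2 : J.wPref w b c) : J.wPref w a c := by
  obtain ⟨r, r', e1, e2, hlt⟩ := h1
  obtain ⟨s, s', f1, f2, hlt'⟩ := h2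
  rw [e2] at f1; cases f1
  exact ⟨r, s', e1, f2, lt_trans hlt hlt'⟩

lemma mTotal {J : SMInst (Fin n) (Fin n)} (hs : J.MStrict) {m w w' : Fin n}
    (h1 : J.mAcc m w) (h2 : J.mAcc m w') (hne : w ≠ w') :
    J.mPref m w w' ∨ J.mPref m w' w := by
  obtain ⟨r, hr⟩ := Option.isSome_iff_exists.1 h1
  obtain ⟨r', hr'⟩ := Option.isSome_iff_exists.1 h2
  rcases lt_trichotomy r r' with h | h | h
  · exact Or.inl ⟨r, r', hr, hr', h⟩
  · exact absurd (hs m w w' (by rw [hr, hr', h]) h1) hne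
  · exact Or.inr ⟨r', r, hr', hr, h⟩

lemma wTotal {J : SMInst (Fin n) (Fin n)} (hs : J.WStrict) {w m m' : Fin n}
    (h1 : J.wAcc w m) (h2 : J.wAcc w m') (hne : m ≠ m') :
    J.wPref w m m' ∨ J.wPref w m' m := by
  obtain ⟨r, hr⟩ := Option.isSome_iff_exists.1 h1
  obtain ⟨r', hr'⟩ := Option.isSome_iff_exists.1 h2
  rcases lt_trichotomy r r' with h | h | h
  · exact Or.inl ⟨r, r', hr, hr', h⟩
  · exact absurd (hs w m m' (by rw [hr, hr', h]) h1) hne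
  · exact Or.inr ⟨r', r, hr', hr, h⟩

/-! ### The `held` function: a woman's best proposer so far -/

noncomputable def held (J : SMInst (Fin n) (Fin n)) :
    List (Fin n × Fin n) → Fin n → Option (Fin n)
  | [], _ => none
  | p :: L, w =>
    if p.2 = w ∧ J.wAcc w p.1 ∧ (∀ m₀, held J L w = some m₀ → J.wPref w p.1 m₀)
    then some p.1 else held J L w

lemma held_mem {J : SMInst (Fin n) (Fin n)} {L : List (Fin n × Fin n)} {w m : Fin n}
    (h : held J L w = some m) : (m, w) ∈ L ∧ J.wAcc w m := by
  induction L with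
  | nil => simp [held] at h
  | cons p L ih =>
    rw [held] at h
    split_ifs at h with hc
    · cases h; exact ⟨by simp [← hc.1], hc.2.1⟩
    · have := ih h; exact ⟨List.mem_cons_of_mem _ this.1, this.2⟩

lemma held_best {J : SMInst (Fin n) (Fin n)} (hs : J.WStrict)
    {L : List (Fin n × Fin n)} {w m : Fin n}
    (hmem : (m, w) ∈ L) (hacc : J.wAcc w m) :
    ∃ m₀, held J L w = some m₀ ∧ (m₀ = m ∨ J.wPref w m₀ m) := by
  induction L with
  | nil => simp at hmem
  | cons p L ih =>
    rw [held]
    by_cases hc : p.2 = w ∧ J.wAcc w p.1 ∧ (∀ m₀, held J L w = some m₀ → J.wPref w p.1 m₀)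
    · rw [if_pos hc]
      refine ⟨p.1, rfl, ?_⟩
      rcases List.mem_cons.1 hmem with heq | hmem'
      · exact Or.inl (by rw [← heq])
      · obtain ⟨m₀, hm₀, hor⟩ := ih hmem'
        have hp := hc.2.2 m₀ hm₀
        rcases hor with rfl | h
        · exact Or.inr hp
        · exact Or.inr (wPref_trans hp h)
    · rw [if_neg hc]
      rcases List.mem_cons.1 hmem with heq | hmem'
      · have h2w : p.2 = w := by rw [← heq]
        have haccp : J.wAcc w p.1 := by rw [← heq]; exact hacc
        push_neg at hc
        obtain ⟨m₀, hm₀, hnp⟩ := hc h2w haccp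
        refine ⟨m₀, hm₀, ?_⟩
        have hp1 : p.1 = m := by rw [← heq]
        rw [hp1] at hnp
        by_cases hmm : m₀ = m
        · exact Or.inl hmm
        · rcases wTotal hs (held_mem hm₀).2 hacc hmm with h | h
          · exact Or.inr h
          · exact absurd h hnp
      · exact ih hmem'

lemma held_cons_mono {J : SMInst (Fin n) (Fin n)} {L : List (Fin n × Fin n)}
    {p : Fin n × Fin n} {w m₀ : Fin n} (h : held J L w = some m₀) :
    ∃ m₁, held J (p :: L) w = some m₁ ∧ (m₁ = m₀ ∨ J.wPref w m₁ m₀) := by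
  rw [held]
  by_cases hc : p.2 = w ∧ J.wAcc w p.1 ∧ (∀ m₁, held J L w = some m₁ → J.wPref w p.1 m₁)
  · rw [if_pos hc]; exact ⟨p.1, rfl, Or.inr (hc.2.2 m₀ h)⟩
  · rw [if_neg hc]; exact ⟨m₀, h, Or.inl rfl⟩

lemma held_suffix_mono {J : SMInst (Fin n) (Fin n)} {L' L : List (Fin n × Fin n)}
    {w m₀ : Fin n} (hsuf : L' <:+ L) (h : held J L' w = some m₀) :
    ∃ m₁, held J L w = some m₁ ∧ (m₁ = m₀ ∨ J.wPref w m₁ m₀) := by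
  obtain ⟨t, rfl⟩ := hsuf
  induction t with
  | nil => exact ⟨m₀, h, Or.inl rfl⟩
  | cons p t ih =>
    obtain ⟨m₁, h₁, hor₁⟩ := ih
    obtain ⟨m₂, h₂, hor₂⟩ := held_cons_mono (p := p) h₁
    refine ⟨m₂, h₂, ?_⟩
    rcases hor₂ with rfl | h2
    · exact hor₁
    · rcases hor₁ with rfl | h1
      · exact Or.inr h2
      · exact Or.inr (wPref_trans h2 h1)

lemma held_final {J : SMInst (Fin n) (Fin n)} (hs : J.WStrict)
    {L' L : List (Fin n × Fin n)} {w m : Fin n}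
    (hmem : (m, w) ∈ L') (hsuf : L' <:+ L) (h : held J L w = some m) :
    held J L' w = some m := by
  have hacc : J.wAcc w m := (held_mem h).2
  obtain ⟨m₀, h₀, hor₀⟩ := held_best hs hmem hacc
  obtain ⟨m₁, h₁, hor₁⟩ := held_suffix_mono hsuf h₀
  rw [h] at h₁
  have hm : m = m₁ := Option.some.inj h₁
  subst hm
  rcases hor₀ with rfl | hp₀
  · exact h₀
  · exfalso
    rcases hor₁ with heq | hp₁
    · rw [heq] at hp₀; exact wPref_irrefl J w m₀ hp₀
    · exact wPref_asymm hp₀ hp₁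

/-! ### The run invariant -/

inductive Inv (J : SMInst (Fin n) (Fin n)) : List (Fin n × Fin n) → Prop
  | nil : Inv J []
  | cons {L : List (Fin n × Fin n)} {m w : Fin n} :
      Inv J L → (∀ v, held J L v ≠ some m) → J.mAcc m w → (m, w) ∉ L →
      (∀ w', J.mAcc m w' → (m, w') ∉ L → ¬ J.mPref m w' w) → Inv J ((m, w) :: L)

lemma Inv.mem_acc {J : SMInst (Fin n) (Fin n)} {L : List (Fin n × Fin n)}
    (hI : Inv J L) {m w : Fin n} (h : (m, w) ∈ L) : J.mAcc m w := by
  induction hI with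
  | nil => simp at h
  | cons hI hfree hacc hnin htop ih =>
    rcases List.mem_cons.1 h with heq | h'
    · cases heq; exact hacc
    · exact ih h'

lemma Inv.suffix {J : SMInst (Fin n) (Fin n)} {L L' : List (Fin n × Fin n)}
    (hI : Inv J L) (hsuf : L' <:+ L) : Inv J L' := by
  induction hI with
  | nil => rw [List.suffix_nil.1 hsuf]; exact Inv.nil
  | cons hI hfree hacc hnin htop ih =>
    rcases List.suffix_cons_iff.1 hsuf with rfl | h
    · exact Inv.cons hI hfree hacc hnin htop
    · exact ih h

lemma Inv.nodup {J : SMInst (Fin n) (Fin n)} {L : List (Fin n × Fin n)}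
    (hI : Inv J L) : L.Nodup := by
  induction hI with
  | nil => exact List.nodup_nil
  | cons hI hfree hacc hnin htop ih => exact List.nodup_cons.2 ⟨hnin, ih⟩

lemma Inv.proposed_better {J : SMInst (Fin n) (Fin n)} {L : List (Fin n × Fin n)}
    (hI : Inv J L) {m w w' : Fin n} (hmem : (m, w) ∈ L)
    (hacc' : J.mAcc m w') (hpref : J.mPref m w' w) : (m, w') ∈ L := by
  induction hI with
  | nil => simp at hmem
  | cons hI hfree hacc hnin htop ih =>
    rcases List.mem_cons.1 hmem with heq | h'
    · cases heq
      by_contra hnot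
      have hnin' : (m, w') ∉ _ := fun hh => hnot (List.mem_cons_of_mem _ hh)
      exact htop w' hacc' hnin' hpref
    · exact List.mem_cons_of_mem _ (ih h')

lemma Inv.held_unique {J : SMInst (Fin n) (Fin n)} {L : List (Fin n × Fin n)}
    (hI : Inv J L) {v v' m : Fin n}
    (h1 : held J L v = some m) (h2 : held J L v' = some m) : v = v' := by
  induction hI with
  | nil => simp [held] at h1
  | @cons L m₁ w₁ hI hfree hacc hnin htop ih =>
    by_contra hne
    have key : ∀ u, u ≠ w₁ → held J ((m₁, w₁) :: L) u = held J L u := by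
      intro u hu
      rw [held, if_neg]
      rintro ⟨h, -⟩
      exact hu (by simpa using h.symm)
    by_cases hv : v = w₁ <;> by_cases hv' : v' = w₁
    · exact hne (hv.trans hv'.symm)
    · subst hv
      rw [key v' hv'] at h2
      rw [held] at h1
      split_ifs at h1 with hc
      · have hm : m₁ = m := by simpa using h1
        subst hm; exact hfree v' h2
      · exact hne (ih h1 h2)
    · subst hv'
      rw [key v hv] at h1
      rw [held] at h2
      split_ifs at h2 with hc
      · have hm : m₁ = m := by simpa using h2
        subst hm; exact hfree v h1
      · exact hne (ih h1 h2)
    · rw [key v hv] at h1; rw [key v' hv'] at h2; exact hne (ih h1 h2)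

lemma Inv.ord {J : SMInst (Fin n) (Fin n)} (hs : J.MStrict)
    {A B : List (Fin n × Fin n)} (hI : Inv J (A ++ B)) {m wa wb : Fin n}
    (ha : (m, wa) ∈ A) (hb : (m, wb) ∈ B) : J.mPref m wb wa := by
  induction A with
  | nil => simp at ha
  | cons x A ih =>
    have hI' : Inv J (A ++ B) := hI.suffix (List.suffix_cons _ _)
    rcases List.mem_cons.1 ha with heq | ha'
    · subst heq
      cases hI with
      | cons hI2 hfree hacc hnin htop =>
        have hbmem : (m, wb) ∈ A ++ B := List.mem_append_right _ hb
        have haccb : J.mAcc m wb := hI'.mem_acc hbmem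
        have hne : wa ≠ wb := by rintro rfl; exact hnin hbmem
        rcases mTotal hs haccb hacc hne.symm with h | h
        · exact h
        · exact absurd (hI'.proposed_better hbmem hacc h) hnin
    · exact ih hI' ha'

/-! ### Existence of a complete run -/

lemma exists_run (J : SMInst (Fin n) (Fin n)) :
    ∃ L, Inv J L ∧
      ∀ m, (∀ v, held J L v ≠ some m) → ∀ w, J.mAcc m w → (m, w) ∈ L := by
  by_contra hcon
  push_neg at hcon
  have grow : ∀ k, ∃ L, Inv J L ∧ L.length = k := by
    intro k
    induction k with
    | zero => exact ⟨[], Inv.nil, rfl⟩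
    | succ k ih =>
      obtain ⟨L, hL, hlen⟩ := ih
      obtain ⟨m, hfree, w, hacc, hnin⟩ := hcon L hL
      have hne : (Finset.univ.filter (fun w' => J.mAcc m w' ∧ (m, w') ∉ L)).Nonempty :=
        ⟨w, by simp [hacc, hnin]⟩
      obtain ⟨w₀, hw₀, hmin⟩ :=
        Finset.exists_min_image _ (fun w' => (J.mpref m w').getD 0) hne
      simp only [Finset.mem_filter, Finset.mem_univ, true_and] at hw₀ hmin
      refine ⟨(m, w₀) :: L, Inv.cons hL hfree hw₀.1 hw₀.2 ?_, by simp [hlen]⟩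
      intro w' hacc' hnin' hpref
      obtain ⟨r', r₀, e1, e2, hlt⟩ := hpref
      have hm := hmin w' ⟨hacc', hnin'⟩
      rw [e1, e2] at hm
      simp at hm
      omega
  obtain ⟨L, hL, hlen⟩ := grow (Fintype.card (Fin n × Fin n) + 1)
  have := hL.nodup.length_le_card
  omega

noncomputable def daList (J : SMInst (Fin n) (Fin n)) : List (Fin n × Fin n) :=
  (exists_run J).choose

lemma daList_inv (J : SMInst (Fin n) (Fin n)) : Inv J (daList J) :=
  (exists_run J).choose_spec.1

lemma daList_end (J : SMInst (Fin n) (Fin n)) :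
    ∀ m, (∀ v, held J (daList J) v ≠ some m) → ∀ w, J.mAcc m w → (m, w) ∈ daList J :=
  (exists_run J).choose_spec.2

noncomputable def daMatch (J : SMInst (Fin n) (Fin n)) : Finset (Fin n × Fin n) :=
  Finset.univ.filter (fun p => held J (daList J) p.2 = some p.1)

lemma daMatch_mem {J : SMInst (Fin n) (Fin n)} {m w : Fin n} :
    (m, w) ∈ daMatch J ↔ held J (daList J) w = some m := by
  simp [daMatch]

lemma da_isMatching (J : SMInst (Fin n) (Fin n)) : J.IsMatching (daMatch J) := by
  refine ⟨?_, ?_, ?_⟩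
  · rintro ⟨m, w⟩ hp
    have h := daMatch_mem.1 hp
    have h2 := held_mem h
    exact ⟨(daList_inv J).mem_acc h2.1, h2.2⟩
  · rintro ⟨m, w⟩ hp ⟨m', w'⟩ hq h1
    dsimp at h1; subst h1
    have h := daMatch_mem.1 hp
    have h' := daMatch_mem.1 hq
    have := (daList_inv J).held_unique h h'
    simp [this]
  · rintro ⟨m, w⟩ hp ⟨m', w'⟩ hq h2
    dsimp at h2; subst h2
    have h := daMatch_mem.1 hp
    have h' := daMatch_mem.1 hq
    rw [h] at h'
    rw [Option.some.inj h']

lemma da_stable {J : SMInst (Fin n) (Fin n)} (hJ : J.NoTies) : J.IsStable (daMatch J) := by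
  refine ⟨da_isMatching J, ?_⟩
  rintro m w ⟨haccm, haccw, h3, h4⟩
  have hmemL : (m, w) ∈ daList J := by
    rcases h3 with hsing | ⟨w', hw', hpref⟩
    · refine daList_end J m ?_ w haccm
      intro v hv
      exact hsing v (daMatch_mem.2 hv)
    · have h := daMatch_mem.1 hw'
      exact (daList_inv J).proposed_better (held_mem h).1 haccm hpref
  obtain ⟨m₀, h₀, hor⟩ := held_best hJ.2 hmemL haccw
  rcases h4 with hsing | ⟨m', hm', hpref⟩
  · exact hsing m₀ (daMatch_mem.2 h₀)
  · have hmm : m' = m₀ := by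
      have hh := daMatch_mem.1 hm'
      rw [h₀] at hh
      exact (Option.some.inj hh).symm
    subst hmm
    rcases hor with heq | h
    · rw [heq] at hpref; exact wPref_irrefl J w m hpref
    · exact wPref_asymm hpref h

/-! ### The blocking lemma -/

lemma exists_last_pred {γ : Type*} (p : γ → Prop) {L : List γ} (h : ∃ x ∈ L, p x) :
    ∃ A a B, L = A ++ a :: B ∧ p a ∧ ∀ x ∈ A, ¬ p x := by
  induction L with
  | nil => simp at h
  | cons y L ih =>
    by_cases hy : p y
    · exact ⟨[], y, L, rfl, hy, by simp⟩
    · have h' : ∃ x ∈ L, p x := by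
        obtain ⟨x, hx, hpx⟩ := h
        rcases List.mem_cons.1 hx with rfl | hx'
        · exact absurd hpx hy
        · exact ⟨x, hx', hpx⟩
      obtain ⟨A, a, B, hsp, hpa, hA⟩ := ih h'
      refine ⟨y :: A, a, B, by rw [hsp]; rfl, hpa, ?_⟩
      intro x hx
      rcases List.mem_cons.1 hx with rfl | hx'
      · exact hy
      · exact hA x hx'

lemma blocking {J : SMInst (Fin n) (Fin n)} (hJ : J.NoTies)
    {M' : Finset (Fin n × Fin n)} (hM' : J.IsMatching M')
    (hne : ∃ m, J.mPrefMatching m M' (daMatch J)) :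
    ∃ m w, ¬ J.mPrefMatching m M' (daMatch J) ∧ J.Blocks M' m w := by
  classical
  set M := daMatch J with hM
  have hMm : J.IsMatching M := da_isMatching J
  have hMs : J.IsStable M := da_stable hJ
  set B : Finset (Fin n) := Finset.univ.filter (fun m => J.mPrefMatching m M' M) with hB
  have hBmem : ∀ m, m ∈ B ↔ J.mPrefMatching m M' M := by intro m; simp [hB]
  by_cases hcase : ∃ p ∈ M', p.1 ∈ B ∧ ∀ q ∈ M, ¬ (q.1 ∈ B ∧ q.2 = p.2)
  · -- Case 1 : some B-man has an M'-partner not matched in M to a B-man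
    obtain ⟨p, hpM', hpB, hnoq⟩ := hcase
    obtain ⟨m, w⟩ := p
    have hpref := (hBmem m).1 hpB
    obtain ⟨w₀, hw₀M', hacc₀, h3⟩ := hpref
    have hww₀ : w₀ = w := congrArg Prod.snd (hM'.2.1 (m, w₀) hw₀M' (m, w) hpM' rfl)
    subst hww₀
    have haccw : J.wAcc w₀ m := (hM'.1 (m, w₀) hpM').2
    by_cases hwsing : SMInst.wSingle M w₀
    · exact absurd ⟨hacc₀, haccw, h3, Or.inl hwsing⟩ (hMs.2 m w₀)
    · have : ∃ m₁, (m₁, w₀) ∈ M := by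
        unfold SMInst.wSingle at hwsing; push_neg at hwsing; exact hwsing
      obtain ⟨m₁, hm₁M⟩ := this
      have hm₁nB : m₁ ∉ B := fun hmem => hnoq (m₁, w₀) hm₁M ⟨hmem, rfl⟩
      have hmne : m ≠ m₁ := by
        rintro rfl
        rcases h3 with hsing | ⟨w₁, hw₁M, hpref13⟩
        · exact hsing w₀ hm₁M
        · have he : w₁ = w₀ := congrArg Prod.snd (hMm.2.1 _ hw₁M _ hm₁M rfl)
          rw [he] at hpref13
          exact mPref_irrefl J m w₀ hpref13
      have haccm1 := hMm.1 _ hm₁M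
      have hw_pref : J.wPref w₀ m₁ m := by
        have hnb := hMs.2 m w₀
        by_contra hnp
        rcases wTotal hJ.2 haccw haccm1.2 hmne with h | h
        · exact hnb ⟨hacc₀, haccw, h3, Or.inr ⟨m₁, hm₁M, h⟩⟩
        · exact hnp h
      refine ⟨m₁, w₀, fun hh => hm₁nB ((hBmem m₁).2 hh), ?_⟩
      refine ⟨haccm1.1, haccm1.2, ?_, Or.inr ⟨m, hpM', hw_pref⟩⟩
      by_cases hsing' : SMInst.mSingle M' m₁
      · exact Or.inl hsing'
      · have : ∃ w₂, (m₁, w₂) ∈ M' := by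
          unfold SMInst.mSingle at hsing'; push_neg at hsing'; exact hsing'
        obtain ⟨w₂, hw₂⟩ := this
        refine Or.inr ⟨w₂, hw₂, ?_⟩
        have hnpref : ¬ J.mPrefMatching m₁ M' M := fun hh => hm₁nB ((hBmem m₁).2 hh)
        have hacc₂ : J.mAcc m₁ w₂ := (hM'.1 _ hw₂).1
        have hnot : ¬ (SMInst.mSingle M m₁ ∨ ∃ w', (m₁, w') ∈ M ∧ J.mPref m₁ w₂ w') :=
          fun hor => hnpref ⟨w₂, hw₂, hacc₂, hor⟩
        push_neg at hnot
        have hnp2 : ¬ J.mPref m₁ w₂ w₀ := hnot.2 w₀ hm₁M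
        have hw₂ne : w₂ ≠ w₀ := by
          rintro rfl
          exact hmne (congrArg Prod.fst (hM'.2.2 _ hpM' _ hw₂ rfl))
        rcases mTotal hJ.1 haccm1.1 hacc₂ hw₂ne.symm with h | h
        · exact h
        · exact absurd h hnp2
  · -- Case 2 : every M'-partner of a B-man is matched in M to a B-man
    push_neg at hcase
    have hBne : B.Nonempty := by
      obtain ⟨m, hm⟩ := hne; exact ⟨m, (hBmem m).2 hm⟩
    set F' := M'.filter (fun p => p.1 ∈ B) with hF'
    set F := M.filter (fun p => p.1 ∈ B) with hF
    have hBmatched' : ∀ m ∈ B, ∃ w, (m, w) ∈ M' := by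
      intro m hm; obtain ⟨w₀, h₀, -, -⟩ := (hBmem m).1 hm; exact ⟨w₀, h₀⟩
    have hcF' : F'.card = B.card := by
      apply Finset.card_bij (fun p _ => p.1)
      · intro p hp; exact (Finset.mem_filter.1 hp).2
      · intro p hp q hq h
        exact hM'.2.1 p (Finset.mem_filter.1 hp).1 q (Finset.mem_filter.1 hq).1 h
      · intro m hm
        obtain ⟨w, hw⟩ := hBmatched' m hm
        exact ⟨(m, w), Finset.mem_filter.2 ⟨hw, hm⟩, rfl⟩
    have hsndinj : Set.InjOn Prod.snd (F' : Set (Fin n × Fin n)) := by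
      intro p hp q hq h
      rw [Finset.mem_coe, hF', Finset.mem_filter] at hp hq
      exact hM'.2.2 p hp.1 q hq.1 h
    set W' := F'.image Prod.snd with hW'
    set WB := F.image Prod.snd with hWB
    have hcW' : W'.card = B.card := by
      rw [hW', Finset.card_image_of_injOn hsndinj, hcF']
    have hsub : W' ⊆ WB := by
      intro w hw
      simp only [hW', Finset.mem_image, hF', Finset.mem_filter] at hw
      obtain ⟨p, ⟨hpM', hpB⟩, hpw⟩ := hw
      obtain ⟨q, hqM, hqB, hq2⟩ := hcase p hpM' hpB
      simp only [hWB, Finset.mem_image, hF, Finset.mem_filter]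
      exact ⟨q, ⟨hqM, hqB⟩, by rw [hq2, hpw]⟩
    have hcF : F.card ≤ B.card := by
      apply Finset.card_le_card_of_injOn (fun p => p.1)
      · intro p hp; exact (Finset.mem_filter.1 hp).2
      · intro p hp q hq h
        simp only [Finset.mem_coe] at hp hq
        exact hMm.2.1 p (Finset.mem_filter.1 hp).1 q (Finset.mem_filter.1 hq).1 h
    have hWBle : WB.card ≤ F.card := Finset.card_image_le
    have hWeq : W' = WB := Finset.eq_of_subset_of_card_le hsub (by omega)
    have hWBc : WB.card = B.card := by rw [← hWeq, hcW']
    have hBmatched : ∀ m ∈ B, ∃ w, (m, w) ∈ M := by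
      by_contra hnot
      push_neg at hnot
      obtain ⟨mh, hmhB, hmh⟩ := hnot
      have hle : F.card ≤ (B.erase mh).card := by
        apply Finset.card_le_card_of_injOn (fun p => p.1)
        · intro p hp
          have hp' := Finset.mem_filter.1 hp
          refine Finset.mem_erase.2 ⟨?_, hp'.2⟩
          intro hpe
          exact hmh p.2 (by rw [← hpe]; simpa using hp'.1)
        · intro p hp q hq h
          simp only [Finset.mem_coe] at hp hq
          exact hMm.2.1 p (Finset.mem_filter.1 hp).1 q (Finset.mem_filter.1 hq).1 h
      have hce := Finset.card_erase_of_mem hmhB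
      have hpos : 0 < B.card := Finset.card_pos.2 hBne
      omega
    set L := daList J with hLdef
    have hInv : Inv J L := daList_inv J
    have hBdata : ∀ m ∈ B, ∃ wm w', (m, wm) ∈ M ∧ (m, w') ∈ M' ∧ J.mPref m w' wm := by
      intro m hm
      obtain ⟨wm, hwm⟩ := hBmatched m hm
      obtain ⟨w', hw'M', hacc', h3⟩ := (hBmem m).1 hm
      rcases h3 with hsing | ⟨w₁, hw₁M, hp⟩
      · exact absurd hwm (hsing wm)
      · have he : w₁ = wm := congrArg Prod.snd (hMm.2.1 _ hw₁M _ hwm rfl)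
        rw [he] at hp
        exact ⟨wm, w', hwm, hw'M', hp⟩
    have hW'mem : ∀ w, w ∈ W' ↔ ∃ m ∈ B, (m, w) ∈ M' := by
      intro w
      simp only [hW', Finset.mem_image, hF', Finset.mem_filter]
      constructor
      · rintro ⟨p, ⟨h1, h2⟩, rfl⟩; exact ⟨p.1, h2, by simpa using h1⟩
      · rintro ⟨m, hmB, hmw⟩; exact ⟨(m, w), ⟨hmw, hmB⟩, rfl⟩
    have hWBmem : ∀ w, w ∈ WB ↔ ∃ m ∈ B, (m, w) ∈ M := by
      intro w
      simp only [hWB, Finset.mem_image, hF, Finset.mem_filter]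
      constructor
      · rintro ⟨p, ⟨h1, h2⟩, rfl⟩; exact ⟨p.1, h2, by simpa using h1⟩
      · rintro ⟨m, hmB, hmw⟩; exact ⟨(m, w), ⟨hmw, hmB⟩, rfl⟩
    have hpredex : ∃ x ∈ L, x.1 ∈ B ∧ x.2 ∈ W' := by
      obtain ⟨m, hmB⟩ := hBne
      obtain ⟨wm, w', hwm, hw'M', hp⟩ := hBdata m hmB
      have hmemL : (m, wm) ∈ L := (held_mem (daMatch_mem.1 hwm)).1
      have hacc' : J.mAcc m w' := (hM'.1 _ hw'M').1
      have hmem' : (m, w') ∈ L := hInv.proposed_better hmemL hacc' hp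
      exact ⟨(m, w'), hmem', hmB, (hW'mem w').2 ⟨m, hmB, hw'M'⟩⟩
    obtain ⟨L₂, a, L₁, hLsplit, hpa, hL₂⟩ :=
      exists_last_pred (fun x : Fin n × Fin n => x.1 ∈ B ∧ x.2 ∈ W') hpredex
    obtain ⟨mstar, w⟩ := a
    obtain ⟨hmstarB, hwW'⟩ := hpa
    have hInv' : Inv J (L₂ ++ (mstar, w) :: L₁) := by rw [← hLsplit]; exact hInv
    have hInv1 : Inv J ((mstar, w) :: L₁) := hInv'.suffix (List.suffix_append _ _)
    have hInvL₁ : Inv J L₁ := hInv1.suffix (List.suffix_cons _ _)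
    have hsufL₁ : L₁ <:+ L := by
      rw [hLsplit]; exact (List.suffix_cons _ _).trans (List.suffix_append _ _)
    have hfree1 : ∀ v, held J L₁ v ≠ some mstar := by
      cases hInv1 with | cons _ hfree _ _ _ => exact hfree
    have hnin1 : (mstar, w) ∉ L₁ := by
      cases hInv1 with | cons _ _ _ hnin _ => exact hnin
    -- Claim A : w is mstar's final partner
    obtain ⟨w1s, w's, hw1s, hw'sM', hps⟩ := hBdata mstar hmstarB
    have hheldw1s : held J L w1s = some mstar := daMatch_mem.1 hw1s
    have hclaimA : held J L w = some mstar := by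
      by_cases hww : w = w1s
      · rw [hww]; exact hheldw1s
      · exfalso
        have hmemL : (mstar, w1s) ∈ L := (held_mem hheldw1s).1
        rw [hLsplit] at hmemL
        rcases List.mem_append.1 hmemL with h2 | h1
        · exact hL₂ _ h2 ⟨hmstarB, by
            show (mstar, w1s).2 ∈ W'
            rw [hWeq]; exact (hWBmem w1s).2 ⟨mstar, hmstarB, hw1s⟩⟩
        · rcases List.mem_cons.1 h1 with heq | h1'
          · exact hww (congrArg Prod.snd heq).symm
          · exact hfree1 w1s (held_final hJ.2 h1' hsufL₁ hheldw1s)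
    obtain ⟨m2, hm2B, hm2M'⟩ := (hW'mem w).1 hwW'
    have hm2ne : m2 ≠ mstar := by
      rintro rfl
      have hwmem : (m2, w) ∈ M := daMatch_mem.2 hclaimA
      obtain ⟨wm, w', hwm, hw'M', hp⟩ := hBdata m2 hm2B
      have e1 : wm = w := congrArg Prod.snd (hMm.2.1 _ hwm _ hwmem rfl)
      have e2 : w' = w := congrArg Prod.snd (hM'.2.1 _ hw'M' _ hm2M' rfl)
      rw [e1, e2] at hp
      exact mPref_irrefl J m2 w hp
    have hm2L : (m2, w) ∈ L := by
      obtain ⟨wm, w', hwm, hw'M', hp⟩ := hBdata m2 hm2B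
      have e2 : w' = w := congrArg Prod.snd (hM'.2.1 _ hw'M' _ hm2M' rfl)
      rw [e2] at hp
      have hmemL : (m2, wm) ∈ L := (held_mem (daMatch_mem.1 hwm)).1
      exact hInv.proposed_better hmemL (hM'.1 _ hm2M').1 hp
    have hm2L₁ : (m2, w) ∈ L₁ := by
      rw [hLsplit] at hm2L
      rcases List.mem_append.1 hm2L with h2 | h1
      · exact absurd ⟨hm2B, hwW'⟩ (hL₂ _ h2)
      · rcases List.mem_cons.1 h1 with heq | h1'
        · exact absurd (congrArg Prod.fst heq) hm2ne
        · exact h1'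
    have haccw2 : J.wAcc w m2 := (hM'.1 _ hm2M').2
    obtain ⟨m, hheldm, hor⟩ := held_best hJ.2 hm2L₁ haccw2
    have hmmem := held_mem hheldm
    have hmne_star : m ≠ mstar := by
      rintro rfl; exact hnin1 hmmem.1
    have hmnB : m ∉ B := by
      intro hmB
      obtain ⟨wm, w', hwm, hw'M', hp⟩ := hBdata m hmB
      have hheldwm : held J L wm = some m := daMatch_mem.1 hwm
      have hwmne : wm ≠ w := by
        rintro rfl
        rw [hclaimA] at hheldwm
        exact hmne_star (Option.some.inj hheldwm).symm
      have hmemLwm : (m, wm) ∈ L := (held_mem hheldwm).1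
      rw [hLsplit] at hmemLwm
      rcases List.mem_append.1 hmemLwm with h2 | h1
      · exact hL₂ _ h2 ⟨hmB, by
          show (m, wm).2 ∈ W'
          rw [hWeq]; exact (hWBmem wm).2 ⟨m, hmB, hwm⟩⟩
      · rcases List.mem_cons.1 h1 with heq | h1'
        · exact hmne_star (congrArg Prod.fst heq)
        · have hh : held J L₁ wm = some m := held_final hJ.2 h1' hsufL₁ hheldwm
          exact hwmne (hInvL₁.held_unique hh hheldm)
    refine ⟨m, w, fun hh => hmnB ((hBmem m).2 hh), ?_⟩
    have haccmw : J.mAcc m w := hInvL₁.mem_acc hmmem.1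
    refine ⟨haccmw, hmmem.2, ?_, ?_⟩
    · by_cases hsing : SMInst.mSingle M' m
      · exact Or.inl hsing
      · have : ∃ w₀, (m, w₀) ∈ M' := by
          unfold SMInst.mSingle at hsing; push_neg at hsing; exact hsing
        obtain ⟨w₀, hw₀⟩ := this
        refine Or.inr ⟨w₀, hw₀, ?_⟩
        have hnpref : ¬ J.mPrefMatching m M' M := fun hh => hmnB ((hBmem m).2 hh)
        have hacc₀ : J.mAcc m w₀ := (hM'.1 _ hw₀).1
        have hnot : ¬ (SMInst.mSingle M m ∨ ∃ w₁, (m, w₁) ∈ M ∧ J.mPref m w₀ w₁) :=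
          fun hor => hnpref ⟨w₀, hw₀, hacc₀, hor⟩
        push_neg at hnot
        obtain ⟨hnsing, hforall⟩ := hnot
        have : ∃ w₁, (m, w₁) ∈ M := by
          unfold SMInst.mSingle at hnsing; push_neg at hnsing; exact hnsing
        obtain ⟨w₁, hw₁⟩ := this
        have hnp01 : ¬ J.mPref m w₀ w₁ := hforall w₁ hw₁
        have hheldw₁ : held J L w₁ = some m := daMatch_mem.1 hw₁
        have hw₁ne : w₁ ≠ w := by
          rintro rfl
          rw [hclaimA] at hheldw₁
          exact hmne_star (Option.some.inj hheldw₁).symm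
        have hmemw₁ : (m, w₁) ∈ L := (held_mem hheldw₁).1
        have hprefww₁ : J.mPref m w w₁ := by
          rw [hLsplit] at hmemw₁
          rcases List.mem_append.1 hmemw₁ with h2 | h1
          · exact Inv.ord hJ.1 hInv' h2 (List.mem_cons_of_mem _ hmmem.1)
          · rcases List.mem_cons.1 h1 with heq | h1'
            · exact absurd (congrArg Prod.fst heq) hmne_star
            · exfalso
              have hh : held J L₁ w₁ = some m := held_final hJ.2 h1' hsufL₁ hheldw₁
              exact hw₁ne (hInvL₁.held_unique hh hheldm)
        obtain ⟨r, r₁, e1, e2, hlt⟩ := hprefww₁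
        obtain ⟨r₀, hr₀⟩ := Option.isSome_iff_exists.1 hacc₀
        refine ⟨r, r₀, e1, hr₀, ?_⟩
        by_contra hge
        push_neg at hge
        exact hnp01 ⟨r₀, r₁, hr₀, e2, by omega⟩
    · refine Or.inr ⟨m2, hm2M', ?_⟩
      have hmm2 : m ≠ m2 := by rintro rfl; exact hmnB hm2B
      rcases hor with heq | hp
      · exact absurd heq hmm2
      · exact hp

/-! ### Tie-breaking -/

noncomputable def brk (I : SMInst (Fin n) (Fin n)) : SMInst (Fin n) (Fin n) where
  mpref m w := (I.mpref m w).map (fun r => r * n + w.val)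
  wpref w m := (I.wpref w m).map (fun r => r * n + m.val)

lemma brk_mAcc (I : SMInst (Fin n) (Fin n)) (m w : Fin n) :
    (brk I).mAcc m w ↔ I.mAcc m w := by
  simp [SMInst.mAcc, brk]

lemma brk_wAcc (I : SMInst (Fin n) (Fin n)) (w m : Fin n) :
    (brk I).wAcc w m ↔ I.wAcc w m := by
  simp [SMInst.wAcc, brk]

lemma brk_key_lt {r r' : ℕ} {a b : Fin n} (h : r < r') : r * n + a.val < r' * n + b.val := by
  calc r * n + a.val < r * n + n := by have := a.isLt; omega
    _ = (r + 1) * n := by ring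
    _ ≤ r' * n := mul_le_mul_left (Nat.succ_le_of_lt h) n
    _ ≤ r' * n + b.val := Nat.le_add_right _ _

lemma brk_mPref (I : SMInst (Fin n) (Fin n)) {m w w' : Fin n} (h : I.mPref m w w') :
    (brk I).mPref m w w' := by
  obtain ⟨r, r', h1, h2, hlt⟩ := h
  exact ⟨r * n + w.val, r' * n + w'.val, by simp [brk, h1], by simp [brk, h2],
    brk_key_lt hlt⟩

lemma brk_wPref (I : SMInst (Fin n) (Fin n)) {w m m' : Fin n} (h : I.wPref w m m') :
    (brk I).wPref w m m' := by
  obtain ⟨r, r', h1, h2, hlt⟩ := h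
  exact ⟨r * n + m.val, r' * n + m'.val, by simp [brk, h1], by simp [brk, h2],
    brk_key_lt hlt⟩

lemma brk_MStrict (I : SMInst (Fin n) (Fin n)) : (brk I).MStrict := by
  intro m w w' heq hacc
  obtain ⟨k, hk⟩ := Option.isSome_iff_exists.1 hacc
  rcases hw : I.mpref m w with _ | r
  · simp [brk, hw] at hk
  rcases hw' : I.mpref m w' with _ | r'
  · rw [heq] at hk; simp [brk, hw'] at hk
  have : r * n + w.val = r' * n + w'.val := by
    simp [brk, hw, hw'] at heq; exact heq
  have hn : 0 < n := w.pos
  have h1 : w.val < n := w.isLt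
  have h2 : w'.val < n := w'.isLt
  have : w.val = w'.val := by
    have hr : r = r' := by
      rcases lt_trichotomy r r' with h | h | h
      · exact absurd this (Nat.ne_of_lt (brk_key_lt h))
      · exact h
      · exact absurd this.symm (Nat.ne_of_lt (brk_key_lt h))
    rw [hr] at this
    exact Nat.add_left_cancel this
  exact Fin.ext this

lemma brk_WStrict (I : SMInst (Fin n) (Fin n)) : (brk I).WStrict := by
  intro w m m' heq hacc
  obtain ⟨k, hk⟩ := Option.isSome_iff_exists.1 hacc
  rcases hw : I.wpref w m with _ | r
  · simp [brk, hw] at hk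
  rcases hw' : I.wpref w m' with _ | r'
  · rw [heq] at hk; simp [brk, hw'] at hk
  have : r * n + m.val = r' * n + m'.val := by
    simp [brk, hw, hw'] at heq; exact heq
  have : m.val = m'.val := by
    have hr : r = r' := by
      rcases lt_trichotomy r r' with h | h | h
      · exact absurd this (Nat.ne_of_lt (brk_key_lt h))
      · exact h
      · exact absurd this.symm (Nat.ne_of_lt (brk_key_lt h))
    rw [hr] at this
    exact Nat.add_left_cancel this
  exact Fin.ext this

/-! ### 2-approximation -/

lemma two_approx {I : SMInst (Fin n) (Fin n)} {M N : Finset (Fin n × Fin n)}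
    (hM : I.IsStable M) (hN : I.IsMatching N) : N.card ≤ 2 * M.card := by
  classical
  set N₁ := N.filter (fun p => ∃ q ∈ M, q.1 = p.1) with hN₁
  set N₂ := N.filter (fun p => ∃ q ∈ M, q.2 = p.2) with hN₂
  have hsub : N ⊆ N₁ ∪ N₂ := by
    intro p hp
    by_contra hnp
    simp only [Finset.mem_union, hN₁, hN₂, Finset.mem_filter] at hnp
    push_neg at hnp
    have h1 := hnp.1 hp
    have h2 := hnp.2 hp
    have hacc := hN.1 p hp
    refine hM.2 p.1 p.2 ⟨hacc.1, hacc.2, Or.inl ?_, Or.inl ?_⟩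
    · intro w hw; exact h1 (p.1, w) hw rfl
    · intro m hm; exact h2 (m, p.2) hm rfl
  have hc1 : N₁.card ≤ M.card := by
    have hinj : Set.InjOn Prod.fst (N₁ : Set (Fin n × Fin n)) := by
      intro p hp q hq h
      simp only [hN₁, Finset.mem_filter, Finset.coe_filter, Set.mem_setOf_eq] at hp hq
      exact hN.2.1 p hp.1 q hq.1 h
    calc N₁.card = (N₁.image Prod.fst).card := (Finset.card_image_of_injOn hinj).symm
      _ ≤ (M.image Prod.fst).card := by
          apply Finset.card_le_card
          intro a ha
          simp only [Finset.mem_image, hN₁, Finset.mem_filter] at ha ⊢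
          obtain ⟨p, ⟨hpN, q, hqM, hq⟩, hpa⟩ := ha
          exact ⟨q, hqM, by rw [hq, hpa]⟩
      _ ≤ M.card := Finset.card_image_le
  have hc2 : N₂.card ≤ M.card := by
    have hinj : Set.InjOn Prod.snd (N₂ : Set (Fin n × Fin n)) := by
      intro p hp q hq h
      simp only [hN₂, Finset.mem_filter, Finset.coe_filter, Set.mem_setOf_eq] at hp hq
      exact hN.2.2 p hp.1 q hq.1 h
    calc N₂.card = (N₂.image Prod.snd).card := (Finset.card_image_of_injOn hinj).symm
      _ ≤ (M.image Prod.snd).card := by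
          apply Finset.card_le_card
          intro a ha
          simp only [Finset.mem_image, hN₂, Finset.mem_filter] at ha ⊢
          obtain ⟨p, ⟨hpN, q, hqM, hq⟩, hpa⟩ := ha
          exact ⟨q, hqM, by rw [hq, hpa]⟩
      _ ≤ M.card := Finset.card_image_le
  calc N.card ≤ (N₁ ∪ N₂).card := Finset.card_le_card hsub
    _ ≤ N₁.card + N₂.card := Finset.card_union_le _ _
    _ ≤ M.card + M.card := Nat.add_le_add hc1 hc2
    _ = 2 * M.card := (two_mul _).symm

lemma brk_noties (I : SMInst (Fin n) (Fin n)) : (brk I).NoTies :=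
  ⟨brk_MStrict I, brk_WStrict I⟩

lemma brk_stable_back {I : SMInst (Fin n) (Fin n)} {M : Finset (Fin n × Fin n)}
    (h : (brk I).IsStable M) : I.IsStable M := by
  constructor
  · obtain ⟨h1, h2, h3⟩ := h.1
    refine ⟨fun p hp => ?_, h2, h3⟩
    have hh := h1 p hp
    exact ⟨(brk_mAcc I p.1 p.2).1 hh.1, (brk_wAcc I p.2 p.1).1 hh.2⟩
  · intro m w hb
    obtain ⟨h1, h2, h3, h4⟩ := hb
    refine h.2 m w ⟨(brk_mAcc I m w).2 h1, (brk_wAcc I w m).2 h2, ?_, ?_⟩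
    · rcases h3 with hs | ⟨w', hw', hp⟩
      · exact Or.inl hs
      · exact Or.inr ⟨w', hw', brk_mPref I hp⟩
    · rcases h4 with hs | ⟨m', hm', hp⟩
      · exact Or.inl hs
      · exact Or.inr ⟨m', hm', brk_wPref I hp⟩

end SMTIProof

/-- MAX SMTI admits a 2-approximate-stable mechanism that is man-strategy-proof against
coalitions: no nonempty coalition of men can falsify their preference lists so that
every member of the coalition obtains an outcome he prefers with respect to his true list. -/
theorem coalition_man_sp_two_approx_stable_mechanism_SMTI :
    ∃ S : ∀ n : ℕ, SMInst (Fin n) (Fin n) → Finset (Fin n × Fin n),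
      (∀ (n : ℕ) (I : SMInst (Fin n) (Fin n)),
          I.IsStable (S n I) ∧
          ∀ Mopt : Finset (Fin n × Fin n), I.IsStable Mopt →
            Mopt.card ≤ 2 * (S n I).card) ∧
      ¬ ∃ (n : ℕ) (I I' : SMInst (Fin n) (Fin n)) (C : Finset (Fin n)),
          C.Nonempty ∧ I.wpref = I'.wpref ∧
          (∀ m ∉ C, I.mpref m = I'.mpref m) ∧
          ∀ m ∈ C, I.mPrefMatching m (S n I') (S n I) := by
  classical
  refine ⟨fun n I => SMTIProof.daMatch (SMTIProof.brk I), fun n I => ?_, ?_⟩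
  · have hstab := SMTIProof.da_stable (SMTIProof.brk_noties I)
    have hstabI := SMTIProof.brk_stable_back hstab
    exact ⟨hstabI, fun Mopt hMopt => SMTIProof.two_approx hstabI hMopt.1⟩
  · rintro ⟨n, I, I', C, hCne, hw, hoff, hpref⟩
    set J := SMTIProof.brk I with hJ
    set J' := SMTIProof.brk I' with hJ'
    set M := SMTIProof.daMatch J with hMdef
    set M' := SMTIProof.daMatch J' with hM'def
    have hwp : ∀ w m, J.wpref w m = J'.wpref w m := by
      intro w m; simp [hJ, hJ', SMTIProof.brk, hw]
    have hprefJ : ∀ m ∈ C, J.mPrefMatching m M' M := by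
      intro m hm
      obtain ⟨w, hwM', hacc, h3⟩ := hpref m hm
      refine ⟨w, hwM', (SMTIProof.brk_mAcc I m w).2 hacc, ?_⟩
      rcases h3 with hs | ⟨w', hw', hp⟩
      · exact Or.inl hs
      · exact Or.inr ⟨w', hw', SMTIProof.brk_mPref I hp⟩
    have hM'J' : J'.IsMatching M' := SMTIProof.da_isMatching J'
    have hM'J : J.IsMatching M' := by
      refine ⟨?_, hM'J'.2.1, hM'J'.2.2⟩
      rintro ⟨m, w⟩ hp
      have hacc' := hM'J'.1 _ hp
      constructor
      · by_cases hmC : m ∈ C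
        · obtain ⟨w₁, hw₁, hacc₁, -⟩ := hprefJ m hmC
          have he : w₁ = w := congrArg Prod.snd (hM'J'.2.1 _ hw₁ _ hp rfl)
          rwa [he] at hacc₁
        · have he : J.mpref m = J'.mpref m := by
            funext v; simp [hJ, hJ', SMTIProof.brk, hoff m hmC]
          unfold SMInst.mAcc
          rw [he]
          exact hacc'.1
      · unfold SMInst.wAcc
        rw [hwp w m]
        exact hacc'.2
    have hne : ∃ m, J.mPrefMatching m M' M := by
      obtain ⟨m, hm⟩ := hCne; exact ⟨m, hprefJ m hm⟩
    obtain ⟨m, w, hmn, hblk⟩ :=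
      SMTIProof.blocking (SMTIProof.brk_noties I) hM'J hne
    have hmC : m ∉ C := fun hc => hmn (hprefJ m hc)
    have hmpe : J.mpref m = J'.mpref m := by
      funext v; simp [hJ, hJ', SMTIProof.brk, hoff m hmC]
    obtain ⟨b1, b2, b3, b4⟩ := hblk
    refine (SMTIProof.da_stable (SMTIProof.brk_noties I')).2 m w ⟨?_, ?_, ?_, ?_⟩
    · unfold SMInst.mAcc at b1 ⊢; rw [← hmpe]; exact b1
    · unfold SMInst.wAcc at b2 ⊢; rw [← hwp w m]; exact b2
    · rcases b3 with hs | ⟨w', hw', hp⟩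
      · exact Or.inl hs
      · refine Or.inr ⟨w', hw', ?_⟩
        obtain ⟨r, r', e1, e2, hlt⟩ := hp
        exact ⟨r, r', by rw [← hmpe]; exact e1, by rw [← hmpe]; exact e2, hlt⟩
    · rcases b4 with hs | ⟨m', hm', hp⟩
      · exact Or.inl hs
      · refine Or.inr ⟨m', hm', ?_⟩
        obtain ⟨r, r', e1, e2, hlt⟩ := hp
        exact ⟨r, r', by rw [← hwp w m]; exact e1, by rw [← hwp w m']; exact e2, hlt⟩
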